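/- For λ ∈ ℂ with λ ∉ {0, 1, -1, i, -i}, the curve C = {(y₁:y₂:y₃:y₄) ∈ ℙ³(ℂ) : y₁² + y₃² + 2λy₂y₄ = 0, y₂² + y₄² + 2λy₁y₃ = 0} is a smooth complete intersection: the Jacobian matrix of the two quadrics Q₁ = y₁² + y₃² + 2λy₂y₄ and Q₂ = y₂² + y₄² + 2λy₁y₃ has rank 2 at every common nonzero zero of Q₁ and Q₂. -/
import Mathlib

open Matrix

lemma rank_two_of_cols (M : Matrix (Fin 2) (Fin 4) ℂ) (f : Fin 2 → Fin 4)
    (h : IsUnit (M.submatrix id f).det) : M.rank = 2 := by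
  refine le_antisymm (by simpa using M.rank_le_card_height) ?_
  have h1 : (M.submatrix id f).rank = 2 := by
    rw [Matrix.rank_of_isUnit _ ((Matrix.isUnit_iff_isUnit_det _).mpr h)]
    simp
  have h2 : M.submatrix id f =
      M * (1 : Matrix (Fin 4) (Fin 4) ℂ).submatrix (Equiv.refl _) f := by
    rw [Matrix.mul_submatrix_one]
    rfl
  calc 2 = (M.submatrix id f).rank := h1.symm
    _ ≤ M.rank := by rw [h2]; exact Matrix.rank_mul_le_left _ _

theorem stmt_17 (l : ℂ) (h0 : l ≠ 0) (h1 : l ≠ 1) (h2 : l ≠ -1)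
    (h3 : l ≠ Complex.I) (h4 : l ≠ -Complex.I)
    (y : Fin 4 → ℂ) (hy : y ≠ 0)
    (hQ1 : y 0 ^ 2 + y 2 ^ 2 + 2 * l * y 1 * y 3 = 0)
    (hQ2 : y 1 ^ 2 + y 3 ^ 2 + 2 * l * y 0 * y 2 = 0) :
    (!![2 * y 0, 2 * l * y 3, 2 * y 2, 2 * l * y 1;
       2 * l * y 2, 2 * y 1, 2 * l * y 0, 2 * y 3] : Matrix (Fin 2) (Fin 4) ℂ).rank = 2 := by
  set a := y 0 with ha'
  set b := y 1 with hb'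
  set c := y 2 with hc'
  set d := y 3 with hd'
  have hl4 : l ^ 4 - 1 ≠ 0 := by
    intro h
    have hfac : (l - 1) * (l + 1) * (l - Complex.I) * (l + Complex.I) = 0 := by
      linear_combination h + (1 - l ^ 2) * Complex.I_sq
    rcases mul_eq_zero.mp hfac with hf | hf
    · rcases mul_eq_zero.mp hf with hf | hf
      · rcases mul_eq_zero.mp hf with hf | hf
        · exact h1 (by linear_combination hf)
        · exact h2 (by linear_combination hf)
      · exact h3 (by linear_combination hf)
    · exact h4 (by linear_combination hf)
  have key : a * b - l ^ 2 * c * d ≠ 0 ∨ a ^ 2 - c ^ 2 ≠ 0 ∨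
      a * d - l ^ 2 * b * c ≠ 0 ∨ l ^ 2 * a * d - b * c ≠ 0 ∨
      d ^ 2 - b ^ 2 ≠ 0 ∨ c * d - l ^ 2 * a * b ≠ 0 := by
    by_contra hcon
    push_neg at hcon
    obtain ⟨e1, e2, e3, e4, e5, e6⟩ := hcon
    have hab : a * b = 0 := by
      have h' : (l ^ 4 - 1) * (a * b) = 0 := by linear_combination -e1 - l ^ 2 * e6
      exact (mul_eq_zero.mp h').resolve_left hl4
    have had : a * d = 0 := by
      have h' : (l ^ 4 - 1) * (a * d) = 0 := by linear_combination l ^ 2 * e4 - e3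
      exact (mul_eq_zero.mp h').resolve_left hl4
    by_cases ha : a = 0
    · have hc : c = 0 := by
        have h' : c ^ 2 = 0 := by linear_combination -e2 + a * ha
        exact (pow_eq_zero_iff two_ne_zero).mp h'
      have hbd : b * d = 0 := by
        have h' : 2 * l * (b * d) = 0 := by linear_combination hQ1 - a * ha - c * hc
        exact (mul_eq_zero.mp h').resolve_left
          (mul_ne_zero (two_ne_zero) h0)
      rcases mul_eq_zero.mp hbd with hb | hd
      · have hd : d = 0 := by
          have h' : d ^ 2 = 0 := by linear_combination e5 + b * hb
          exact (pow_eq_zero_iff two_ne_zero).mp h'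
        exact hy (funext fun i => by fin_cases i <;> assumption)
      · have hb : b = 0 := by
          have h' : b ^ 2 = 0 := by linear_combination -e5 + d * hd
          exact (pow_eq_zero_iff two_ne_zero).mp h'
        exact hy (funext fun i => by fin_cases i <;> assumption)
    · have hb : b = 0 := (mul_eq_zero.mp hab).resolve_left ha
      have hd : d = 0 := (mul_eq_zero.mp had).resolve_left ha
      have hc : c = 0 := by
        have h' : 2 * l * a * c = 0 := by linear_combination hQ2 - b * hb - d * hd
        exact (mul_eq_zero.mp h').resolve_left
          (mul_ne_zero (mul_ne_zero two_ne_zero h0) ha)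
      refine ha ?_
      have h' : a ^ 2 = 0 := by linear_combination e2 + c * hc
      exact (pow_eq_zero_iff two_ne_zero).mp h'
  set M : Matrix (Fin 2) (Fin 4) ℂ :=
    !![2 * a, 2 * l * d, 2 * c, 2 * l * b;
       2 * l * c, 2 * b, 2 * l * a, 2 * d] with hM
  have h4ne : (4 : ℂ) ≠ 0 := by norm_num
  rcases key with h | h | h | h | h | h
  · have hdet : (M.submatrix id ![0, 1]).det = 4 * (a * b - l ^ 2 * c * d) := by
      simp [hM, Matrix.det_fin_two, Matrix.submatrix_apply]; ring
    exact rank_two_of_cols M ![0, 1]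
      (isUnit_iff_ne_zero.mpr (hdet ▸ mul_ne_zero h4ne h))
  · have hdet : (M.submatrix id ![0, 2]).det = 4 * l * (a ^ 2 - c ^ 2) := by
      simp [hM, Matrix.det_fin_two, Matrix.submatrix_apply]; ring
    exact rank_two_of_cols M ![0, 2]
      (isUnit_iff_ne_zero.mpr (hdet ▸ mul_ne_zero (mul_ne_zero h4ne h0) h))
  · have hdet : (M.submatrix id ![0, 3]).det = 4 * (a * d - l ^ 2 * b * c) := by
      simp [hM, Matrix.det_fin_two, Matrix.submatrix_apply]; ring
    exact rank_two_of_cols M ![0, 3]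
      (isUnit_iff_ne_zero.mpr (hdet ▸ mul_ne_zero h4ne h))
  · have hdet : (M.submatrix id ![1, 2]).det = 4 * (l ^ 2 * a * d - b * c) := by
      simp [hM, Matrix.det_fin_two, Matrix.submatrix_apply]; ring
    exact rank_two_of_cols M ![1, 2]
      (isUnit_iff_ne_zero.mpr (hdet ▸ mul_ne_zero h4ne h))
  · have hdet : (M.submatrix id ![1, 3]).det = 4 * l * (d ^ 2 - b ^ 2) := by
      simp [hM, Matrix.det_fin_two, Matrix.submatrix_apply]; ring
    exact rank_two_of_cols M ![1, 3]
      (isUnit_iff_ne_zero.mpr (hdet ▸ mul_ne_zero (mul_ne_zero h4ne h0) h))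
  · have hdet : (M.submatrix id ![2, 3]).det = 4 * (c * d - l ^ 2 * a * b) := by
      simp [hM, Matrix.det_fin_two, Matrix.submatrix_apply]; ring
    exact rank_two_of_cols M ![2, 3]
      (isUnit_iff_ne_zero.mpr (hdet ▸ mul_ne_zero h4ne h))
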